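/- Let w be a positive rational and let α = w/(uw+1) + kv and β = (w+v)/(ku(w+v)+1) for some nonnegative integer k (these are the k-th right descendant of the left child of w and the k-th left descendant of the right child of w, respectively, i.e., adjacent siblings in a row). Then β = (v·{α} + v²(1 − u·{α})) / (u·⌊α⌋·({α} + v(1 − u·{α})) + v(1 − u·{α})), where ⌊α⌋ and {α} denote the integer and fractional parts of α. -/

import Mathlib

theorem generalized_successor_formula (u v : ℕ) (hu : 0 < u) (hv : 0 < v)
    (w : ℚ) (hw : 0 < w) (k : ℕ) (α β : ℚ)
    (hα : α = w / (u * w + 1) + k * v)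
    (hβ : β = (w + v) / (k * u * (w + v) + 1)) :
    β = ((v : ℚ) * Int.fract α + (v : ℚ) ^ 2 * (1 - u * Int.fract α)) /
        ((u : ℚ) * (⌊α⌋ : ℚ) * (Int.fract α + v * (1 - u * Int.fract α)) +
          v * (1 - u * Int.fract α)) := by
  have hu' : (1 : ℚ) ≤ (u : ℚ) := by exact_mod_cast hu
  have hden : (0 : ℚ) < (u : ℚ) * w + 1 := by positivity
  have hfrac : Int.fract α = w / ((u : ℚ) * w + 1) := by
    have h1 : (0 : ℚ) ≤ w / ((u : ℚ) * w + 1) := by positivity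
    have h2 : w / ((u : ℚ) * w + 1) < 1 := by
      rw [div_lt_one hden]
      nlinarith
    have : α = w / ((u : ℚ) * w + 1) + ((k * v : ℕ) : ℤ) := by
      push_cast; rw [hα]
    rw [this, Int.fract_add_intCast, Int.fract_eq_self.mpr ⟨h1, h2⟩]
  have hfloor : (⌊α⌋ : ℚ) = (k : ℚ) * v := by
    have := Int.fract_add_floor α
    rw [hfrac] at this
    have : (⌊α⌋ : ℚ) = α - w / ((u : ℚ) * w + 1) := by linarith
    rw [this, hα]; ring
  rw [hβ, hfrac, hfloor]
  have hden2 : (0 : ℚ) < (k : ℚ) * u * (w + v) + 1 := by positivity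
  have hv' : (0 : ℚ) < (v : ℚ) := by exact_mod_cast hv
  rw [div_eq_div_iff hden2.ne' (by
    have h2 : w / ((u : ℚ) * w + 1) < 1 := by
      rw [div_lt_one hden]; nlinarith
    have h1 : (0 : ℚ) < w / ((u : ℚ) * w + 1) := by positivity
    have : (1 : ℚ) - u * (w / (u * w + 1)) = 1 / (u * w + 1) := by
      field_simp
      ring
    rw [this]
    positivity)]
  field_simp
  ring
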